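/- Let n ≥ 3 and let 𝒫_n be the ℚ-algebra presented by generators Y_{ij}^k for all triples of distinct i,j,k ∈ [n], subject to: (i) the triangle relations Y_{ij}^k Y_{ji}^k = 1 and Y_{ij}^k Y_{jk}^i Y_{ki}^j = 1 for all distinct i,j,k ∈ [n], and Y_{ij}^ℓ Y_{jk}^ℓ Y_{ki}^ℓ = 1 for all distinct i,j,k,ℓ ∈ [n]; (ii) the exchange relations Y_{iℓ}^j = Y_{ij}^k Y_{jℓ}^i + Y_{iℓ}^k for all cyclic quadruples (i,j,k,ℓ) in [n]. Then the ℚ-algebra homomorphism 𝒫_n → 𝒜_n determined by Y_{ij}^k ↦ x_{ki}⁻¹x_{kj} is injective and its image is 𝒬_n; in particular 𝒫_n is isomorphic to 𝒬_n. -/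

import Mathlib

open scoped Classical

noncomputable section

namespace NCPolygon

/-- Cyclic successor on `Fin n` (the vertices of the `n`-gon in cyclic order). -/
def csucc {n : ℕ} (i : Fin n) : Fin n :=
  ⟨(i.1 + 1) % n, Nat.mod_lt _ (Nat.lt_of_le_of_lt (Nat.zero_le _) i.isLt)⟩

/-- Cyclic predecessor on `Fin n`. -/
def cpred {n : ℕ} (i : Fin n) : Fin n :=
  ⟨(i.1 + (n - 1)) % n, Nat.mod_lt _ (Nat.lt_of_le_of_lt (Nat.zero_le _) i.isLt)⟩

/-- A list of elements of `Fin n` is *cyclic* if its entries are distinct and some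
cyclic rotation of it is strictly increasing. -/
def IsCyclicSeq {n : ℕ} (l : List (Fin n)) : Prop :=
  l.Nodup ∧ ∃ k : ℕ, (l.rotate k).Pairwise (· < ·)

/-- The pair `(i,k)` crosses `(j,l)` iff `(i,j,k,l)` is cyclic. -/
def Crosses {n : ℕ} (p q : Fin n × Fin n) : Prop :=
  IsCyclicSeq [p.1, q.1, p.2, q.2]

def NonCrossing {n : ℕ} (Δ : Set (Fin n × Fin n)) : Prop :=
  (∀ p ∈ Δ, p.1 ≠ p.2) ∧ ∀ p ∈ Δ, ∀ q ∈ Δ, ¬ Crosses p q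

/-- A triangulation of the `n`-gon: a maximal crossing-free set of (directed) chords. -/
def IsTriangulation {n : ℕ} (Δ : Set (Fin n × Fin n)) : Prop :=
  NonCrossing Δ ∧ ∀ Δ' : Set (Fin n × Fin n), NonCrossing Δ' → Δ ⊆ Δ' → Δ' = Δ

/-! ### The noncommutative polygon algebra `𝒜_n` -/

abbrev OffD (n : ℕ) := {p : Fin n × Fin n // p.1 ≠ p.2}

abbrev AGen (n : ℕ) := OffD n ⊕ OffD n

def xF {n : ℕ} (i j : Fin n) : FreeAlgebra ℚ (AGen n) :=
  if h : i ≠ j then FreeAlgebra.ι ℚ (Sum.inl ⟨(i, j), h⟩) else 1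

def xiF {n : ℕ} (i j : Fin n) : FreeAlgebra ℚ (AGen n) :=
  if h : i ≠ j then FreeAlgebra.ι ℚ (Sum.inr ⟨(i, j), h⟩) else 1

/-- The defining relations of `𝒜_n`: invertibility, triangle, and exchange relations. -/
inductive ARel (n : ℕ) : FreeAlgebra ℚ (AGen n) → FreeAlgebra ℚ (AGen n) → Prop
  | mul_inv {i j : Fin n} (h : i ≠ j) : ARel n (xF i j * xiF i j) 1
  | inv_mul {i j : Fin n} (h : i ≠ j) : ARel n (xiF i j * xF i j) 1
  | triangle {i j k : Fin n} (hij : i ≠ j) (hik : i ≠ k) (hjk : j ≠ k) :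
      ARel n (xF i j * xiF k j * xF k i) (xF i k * xiF j k * xF j i)
  | exchange {i j k l : Fin n} (h : IsCyclicSeq [i, j, k, l]) :
      ARel n (xF j l) (xF j k * xiF i k * xF i l + xF j i * xiF k i * xF k l)

/-- The noncommutative `n`-gon algebra `𝒜_n`. -/
abbrev NCPoly (n : ℕ) := RingQuot (ARel n)

/-- The generator `x_{ij} ∈ 𝒜_n` (junk value `1` when `i = j`). -/
def X {n : ℕ} (i j : Fin n) : NCPoly n :=
  RingQuot.mkAlgHom ℚ (ARel n) (xF i j)

/-- The generator `x_{ij}⁻¹ ∈ 𝒜_n`. -/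
def Xinv {n : ℕ} (i j : Fin n) : NCPoly n :=
  RingQuot.mkAlgHom ℚ (ARel n) (xiF i j)

/-- The noncommutative angle `T_i^{jk} = x_{ji}⁻¹ x_{jk} x_{ik}⁻¹ ∈ 𝒜_n`. -/
def Tang {n : ℕ} (i j k : Fin n) : NCPoly n := Xinv j i * X j k * Xinv i k

/-! ### Triangle groups -/

def tF {n : ℕ} (Δ : Set (Fin n × Fin n)) (i j : Fin n) : FreeGroup Δ :=
  if h : (i, j) ∈ Δ then FreeGroup.of (⟨(i, j), h⟩ : Δ) else 1

/-- The triangle relations of the triangle group `𝕋_Δ`. -/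
def triRels {n : ℕ} (Δ : Set (Fin n × Fin n)) : Set (FreeGroup Δ) :=
  { w | ∃ i j k : Fin n, i ≠ j ∧ i ≠ k ∧ j ≠ k ∧
      (i, j) ∈ Δ ∧ (j, i) ∈ Δ ∧ (i, k) ∈ Δ ∧ (k, i) ∈ Δ ∧ (j, k) ∈ Δ ∧ (k, j) ∈ Δ ∧
      w = tF Δ i j * (tF Δ k j)⁻¹ * tF Δ k i *
        (tF Δ i k * (tF Δ j k)⁻¹ * tF Δ j i)⁻¹ }

/-- The triangle group `𝕋_Δ` of a triangulation `Δ`. -/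
abbrev TriGroup {n : ℕ} (Δ : Set (Fin n × Fin n)) := PresentedGroup (triRels Δ)

/-- The generator `t_{ij} ∈ 𝕋_Δ` (junk value `1` when `(i,j) ∉ Δ`). -/
def tG {n : ℕ} (Δ : Set (Fin n × Fin n)) (i j : Fin n) : TriGroup Δ :=
  if h : (i, j) ∈ Δ then PresentedGroup.of (rels := triRels Δ) ⟨(i, j), h⟩ else 1

/-! ### The big triangle group `𝕋_n` -/

def btF {n : ℕ} (i j : Fin n) : FreeGroup (OffD n) :=
  if h : i ≠ j then FreeGroup.of (⟨(i, j), h⟩ : OffD n) else 1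

def bigRels (n : ℕ) : Set (FreeGroup (OffD n)) :=
  { w | ∃ i j k : Fin n, i ≠ j ∧ i ≠ k ∧ j ≠ k ∧
      w = btF i j * (btF k j)⁻¹ * btF k i * (btF i k * (btF j k)⁻¹ * btF j i)⁻¹ }

/-- The big triangle group `𝕋_n`. -/
abbrev BigTriGroup (n : ℕ) := PresentedGroup (bigRels n)

/-- The generator `t_{ij} ∈ 𝕋_n`. -/
def bigT {n : ℕ} (i j : Fin n) : BigTriGroup n :=
  if h : i ≠ j then PresentedGroup.of (rels := bigRels n) ⟨(i, j), h⟩ else 1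

/-! ### Distinguished subalgebras and subgroups -/

/-- `𝒜_Δ`: the subalgebra of `𝒜_n` generated by all `x_{ij}` together with the
`x_{ij}⁻¹` for `(i,j) ∈ Δ`. -/
def ADelta (n : ℕ) (Δ : Set (Fin n × Fin n)) : Subalgebra ℚ (NCPoly n) :=
  Algebra.adjoin ℚ
    ({a | ∃ i j : Fin n, i ≠ j ∧ a = X i j} ∪ {a | ∃ p ∈ Δ, a = Xinv p.1 p.2})

/-- `𝒬_n`: the subalgebra of `𝒜_n` generated by the `y_{ij}^k = x_{ki}⁻¹ x_{kj}`. -/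
def Qn (n : ℕ) : Subalgebra ℚ (NCPoly n) :=
  Algebra.adjoin ℚ
    {a : NCPoly n | ∃ i j k : Fin n, i ≠ j ∧ i ≠ k ∧ j ≠ k ∧ a = Xinv k i * X k j}

/-- `𝕌_Δ`: the subgroup of `𝕋_Δ` generated by the `u_{ij}^k = t_{ki}⁻¹ t_{kj}`. -/
def UDelta {n : ℕ} (Δ : Set (Fin n × Fin n)) : Subgroup (TriGroup Δ) :=
  Subgroup.closure
    {g | ∃ i j k : Fin n, (k, i) ∈ Δ ∧ (k, j) ∈ Δ ∧ g = (tG Δ k i)⁻¹ * tG Δ k j}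


/-- Triples of pairwise distinct indices. -/
abbrev Tri (n : ℕ) := {t : Fin n × Fin n × Fin n // t.1 ≠ t.2.1 ∧ t.1 ≠ t.2.2 ∧ t.2.1 ≠ t.2.2}

/-- The free generator `Y_{ij}^k` (junk value `1` for non-distinct indices). -/
def yF {n : ℕ} (i j k : Fin n) : FreeAlgebra ℚ (Tri n) :=
  if h : i ≠ j ∧ i ≠ k ∧ j ≠ k then FreeAlgebra.ι ℚ ⟨(i, j, k), h⟩ else 1

/-- The defining relations of the presented algebra `𝒫_n`. -/
inductive QRel (n : ℕ) : FreeAlgebra ℚ (Tri n) → FreeAlgebra ℚ (Tri n) → Prop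
  | invol {i j k : Fin n} (h : i ≠ j ∧ i ≠ k ∧ j ≠ k) : QRel n (yF i j k * yF j i k) 1
  | tri3 {i j k : Fin n} (h : i ≠ j ∧ i ≠ k ∧ j ≠ k) :
      QRel n (yF i j k * yF j k i * yF k i j) 1
  | tri4 {i j k l : Fin n} (h : [i, j, k, l].Nodup) :
      QRel n (yF i j l * yF j k l * yF k i l) 1
  | exch {i j k l : Fin n} (h : IsCyclicSeq [i, j, k, l]) :
      QRel n (yF i l j) (yF i j k * yF j l i + yF i l k)

/-! ### Auxiliary development for Statement 8 -/

section Statement8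

variable {n : ℕ}

private def Yq (i j k : Fin n) : RingQuot (QRel n) :=
  RingQuot.mkAlgHom ℚ (QRel n) (yF i j k)

private lemma Yq_junk {i j k : Fin n} (h : ¬(i ≠ j ∧ i ≠ k ∧ j ≠ k)) : Yq i j k = 1 := by
  rw [Yq, yF, dif_neg h, map_one]

private lemma Yq_diag (a c : Fin n) : Yq a a c = 1 := Yq_junk (by simp)

private lemma Yq_invol {i j k : Fin n} (h1 : i ≠ j) (h2 : i ≠ k) (h3 : j ≠ k) :
    Yq i j k * Yq j i k = 1 := by
  have h := RingQuot.mkAlgHom_rel ℚ (QRel.invol (n := n) ⟨h1, h2, h3⟩)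
  rw [map_mul, map_one] at h
  exact h

private lemma Yq_tri3 {i j k : Fin n} (h1 : i ≠ j) (h2 : i ≠ k) (h3 : j ≠ k) :
    Yq i j k * Yq j k i * Yq k i j = 1 := by
  have h := RingQuot.mkAlgHom_rel ℚ (QRel.tri3 (n := n) ⟨h1, h2, h3⟩)
  rw [map_mul, map_mul, map_one] at h
  exact h

private lemma Yq_tri4 {i j k l : Fin n} (h : [i, j, k, l].Nodup) :
    Yq i j l * Yq j k l * Yq k i l = 1 := by
  have h' := RingQuot.mkAlgHom_rel ℚ (QRel.tri4 (n := n) h)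
  rw [map_mul, map_mul, map_one] at h'
  exact h'

private lemma Yq_exch {i j k l : Fin n} (h : IsCyclicSeq [i, j, k, l]) :
    Yq i l j = Yq i j k * Yq j l i + Yq i l k := by
  have h' := RingQuot.mkAlgHom_rel ℚ (QRel.exch (n := n) h)
  rw [map_add, map_mul] at h'
  exact h'

private lemma nodup4_ne {i j k l : Fin n} (h : [i, j, k, l].Nodup) :
    i ≠ j ∧ i ≠ k ∧ i ≠ l ∧ j ≠ k ∧ j ≠ l ∧ k ≠ l := by
  simp only [List.nodup_cons, List.mem_cons, List.mem_singleton, List.not_mem_nil,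
    or_false, not_or, List.nodup_nil, and_true] at h
  tauto

/-- `y_{xz}^w y_{zy}^w = y_{xy}^w` whenever `w ∉ {x,z,y}` (any coincidences among
`x, z, y` allowed, thanks to the junk value `1`). -/
private lemma Ymul {x z y w : Fin n} (h1 : w ≠ x) (h2 : w ≠ z) (h3 : w ≠ y) :
    Yq x z w * Yq z y w = Yq x y w := by
  by_cases hxz : x = z
  · subst hxz; rw [Yq_diag, one_mul]
  by_cases hzy : z = y
  · subst hzy; rw [Yq_diag, mul_one]
  by_cases hxy : x = y
  · subst hxy
    rw [Yq_diag]
    exact Yq_invol hxz h1.symm h2.symm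
  · have hnd : [x, z, y, w].Nodup := by
      simp [List.nodup_cons, hxz, hzy, hxy, Ne.symm h1, Ne.symm h2, Ne.symm h3]
    have h4 := Yq_tri4 hnd
    have h5 : Yq y x w * Yq x y w = 1 :=
      Yq_invol (fun hh => hxy hh.symm) h3.symm h1.symm
    calc Yq x z w * Yq z y w
        = Yq x z w * Yq z y w * (Yq y x w * Yq x y w) := by rw [h5, mul_one]
      _ = Yq x z w * Yq z y w * Yq y x w * Yq x y w := by rw [← mul_assoc]
      _ = Yq x y w := by rw [h4, one_mul]

/-- `y_{xy}^z = y_{xz}^y y_{zy}^x` for distinct `x, y, z`. -/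
private lemma Ysplit {x y z : Fin n} (h1 : x ≠ y) (h2 : x ≠ z) (h3 : y ≠ z) :
    Yq x y z = Yq x z y * Yq z y x := by
  have hA := Yq_tri3 h1 h2 h3
  have hB : Yq y z x * Yq z y x = 1 := Yq_invol h3 h1.symm h2.symm
  have hC : Yq z x y * Yq x z y = 1 := Yq_invol h2.symm h3.symm h1
  have key : Yq y z x * Yq z x y * (Yq x z y * Yq z y x) = 1 := by
    calc Yq y z x * Yq z x y * (Yq x z y * Yq z y x)
        = Yq y z x * ((Yq z x y * Yq x z y) * Yq z y x) := by
          rw [mul_assoc, mul_assoc]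
      _ = 1 := by rw [hC, one_mul, hB]
  calc Yq x y z
      = Yq x y z * (Yq y z x * Yq z x y * (Yq x z y * Yq z y x)) := by
        rw [key, mul_one]
    _ = Yq x y z * (Yq y z x * Yq z x y) * (Yq x z y * Yq z y x) := by
        rw [← mul_assoc (Yq x y z)]
    _ = Yq x y z * Yq y z x * Yq z x y * (Yq x z y * Yq z y x) := by
        rw [← mul_assoc (Yq x y z)]
    _ = Yq x z y * Yq z y x := by rw [hA, one_mul]

/-! #### Relations in `𝒜_n` -/

private lemma X_mul_Xinv {i j : Fin n} (h : i ≠ j) : X i j * Xinv i j = 1 := by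
  have h' := RingQuot.mkAlgHom_rel ℚ (ARel.mul_inv (n := n) h)
  rw [map_mul, map_one] at h'
  exact h'

private lemma Xinv_mul_X {i j : Fin n} (h : i ≠ j) : Xinv i j * X i j = 1 := by
  have h' := RingQuot.mkAlgHom_rel ℚ (ARel.inv_mul (n := n) h)
  rw [map_mul, map_one] at h'
  exact h'

private lemma X_tri {i j k : Fin n} (hij : i ≠ j) (hik : i ≠ k) (hjk : j ≠ k) :
    X i j * Xinv k j * X k i = X i k * Xinv j k * X j i := by
  have h' := RingQuot.mkAlgHom_rel ℚ (ARel.triangle (n := n) hij hik hjk)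
  rw [map_mul, map_mul, map_mul, map_mul] at h'
  exact h'

private lemma X_exch {i j k l : Fin n} (h : IsCyclicSeq [i, j, k, l]) :
    X j l = X j k * Xinv i k * X i l + X j i * Xinv k i * X k l := by
  have h' := RingQuot.mkAlgHom_rel ℚ (ARel.exchange (n := n) h)
  rw [map_add, map_mul, map_mul, map_mul, map_mul] at h'
  exact h'

private lemma sandwich {R : Type*} [Monoid R] {x y : R} (h : x * y = 1) (a b : R) :
    a * x * (y * b) = a * b := by
  rw [mul_assoc a x, ← mul_assoc x, h, one_mul]

private lemma triple_cancel {R : Type*} [Monoid R] {a b c a' b' c' : R}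
    (h1 : c * a' = 1) (h2 : b * b' = 1) (h3 : a * c' = 1) :
    a * b * c * (a' * b' * c') = 1 := by
  have e : a * b * c * (a' * b' * c') = a * (b * (c * a' * (b' * c'))) := by
    rw [mul_assoc, mul_assoc, mul_assoc a', ← mul_assoc c]
  rw [e, h1, one_mul, ← mul_assoc b, h2, one_mul, h3]

private lemma Xinv_swap {i j k : Fin n} (hij : i ≠ j) (hik : i ≠ k) (hjk : j ≠ k) :
    Xinv k i * X k j * Xinv i j = Xinv j i * X j k * Xinv i k := by
  have T := X_tri hij hik hjk
  have hS1T1 : Xinv k i * X k j * Xinv i j * (X i j * Xinv k j * X k i) = 1 :=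
    triple_cancel (Xinv_mul_X hij) (X_mul_Xinv hjk.symm) (Xinv_mul_X hik.symm)
  have hT2S2 : X i k * Xinv j k * X j i * (Xinv j i * X j k * Xinv i k) = 1 :=
    triple_cancel (X_mul_Xinv hij.symm) (Xinv_mul_X hjk) (X_mul_Xinv hik)
  calc Xinv k i * X k j * Xinv i j
      = Xinv k i * X k j * Xinv i j *
          (X i k * Xinv j k * X j i * (Xinv j i * X j k * Xinv i k)) := by
        rw [hT2S2, mul_one]
    _ = Xinv k i * X k j * Xinv i j *
          (X i j * Xinv k j * X k i * (Xinv j i * X j k * Xinv i k)) := by rw [T]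
    _ = Xinv k i * X k j * Xinv i j * (X i j * Xinv k j * X k i) *
          (Xinv j i * X j k * Xinv i k) := by rw [← mul_assoc]
    _ = Xinv j i * X j k * Xinv i k := by rw [hS1T1, one_mul]

/-! #### The homomorphism `f : 𝒫_n → 𝒜_n` -/

private def genQ : Tri n → NCPoly n := fun t => Xinv t.1.2.2 t.1.1 * X t.1.2.2 t.1.2.1

private def FQ : FreeAlgebra ℚ (Tri n) →ₐ[ℚ] NCPoly n := FreeAlgebra.lift ℚ genQ

private lemma FQ_yF {i j k : Fin n} (h1 : i ≠ j) (h2 : i ≠ k) (h3 : j ≠ k) :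
    FQ (yF i j k) = Xinv k i * X k j := by
  rw [FQ, yF, dif_pos ⟨h1, h2, h3⟩, FreeAlgebra.lift_ι_apply]
  rfl

private lemma FQ_rel : ∀ ⦃x y : FreeAlgebra ℚ (Tri n)⦄, QRel n x y → FQ x = FQ y := by
  intro x y r
  induction r with
  | @invol i j k h =>
    obtain ⟨h1, h2, h3⟩ := h
    rw [map_mul, map_one, FQ_yF h1 h2 h3, FQ_yF h1.symm h3 h2]
    rw [sandwich (X_mul_Xinv h3.symm), Xinv_mul_X h2.symm]
  | @tri3 i j k h =>
    obtain ⟨h1, h2, h3⟩ := h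
    rw [map_mul, map_mul, map_one, FQ_yF h1 h2 h3, FQ_yF h3 h1.symm h2.symm,
      FQ_yF h2.symm h3.symm h1]
    have e : Xinv k i * X k j * (Xinv i j * X i k) * (Xinv j k * X j i)
        = Xinv k i * X k j * Xinv i j * (X i k * Xinv j k * X j i) := by
      simp only [mul_assoc]
    rw [e, ← X_tri h1 h2 h3]
    exact triple_cancel (Xinv_mul_X h1) (X_mul_Xinv h3.symm) (Xinv_mul_X h2.symm)
  | @tri4 i j k l h =>
    obtain ⟨h1, h2, h3, h4, h5, h6⟩ := nodup4_ne h
    rw [map_mul, map_mul, map_one, FQ_yF h1 h3 h5, FQ_yF h4 h5 h6,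
      FQ_yF h2.symm h6 h3]
    rw [sandwich (X_mul_Xinv h5.symm), sandwich (X_mul_Xinv h6.symm), Xinv_mul_X h3.symm]
  | @exch i j k l h =>
    obtain ⟨h1, h2, h3, h4, h5, h6⟩ := nodup4_ne h.1
    rw [map_add, map_mul, FQ_yF h3 h1 h5.symm, FQ_yF h1 h2 h4, FQ_yF h5 h1.symm h3.symm,
      FQ_yF h3 h2 h6.symm]
    have swap := Xinv_swap h1 h2 h4
    calc Xinv j i * X j l
        = Xinv j i * (X j k * Xinv i k * X i l + X j i * Xinv k i * X k l) := by
          rw [X_exch h]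
      _ = Xinv j i * (X j k * Xinv i k * X i l) + Xinv j i * (X j i * Xinv k i * X k l) :=
          mul_add _ _ _
      _ = Xinv j i * X j k * Xinv i k * X i l + Xinv j i * X j i * Xinv k i * X k l := by
          simp only [mul_assoc]
      _ = Xinv k i * X k j * Xinv i j * X i l + 1 * Xinv k i * X k l := by
          rw [← swap, Xinv_mul_X h1.symm]
      _ = Xinv k i * X k j * (Xinv i j * X i l) + Xinv k i * X k l := by
          rw [one_mul, mul_assoc (Xinv k i * X k j)]

private def fQ : RingQuot (QRel n) →ₐ[ℚ] NCPoly n :=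
  RingQuot.liftAlgHom ℚ ⟨FQ, FQ_rel⟩

private lemma fQ_mk (x : FreeAlgebra ℚ (Tri n)) :
    fQ (RingQuot.mkAlgHom ℚ (QRel n) x) = FQ x :=
  RingQuot.liftAlgHom_mkAlgHom_apply _ _ _ _

private lemma fQ_gen {i j k : Fin n} (h1 : i ≠ j) (h2 : i ≠ k) (h3 : j ≠ k) :
    fQ (RingQuot.mkAlgHom ℚ (QRel n) (yF i j k)) = Xinv k i * X k j := by
  rw [fQ_mk, FQ_yF h1 h2 h3]

private lemma Phom_ext {B : Type*} [Semiring B] [Algebra ℚ B]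
    {g h : RingQuot (QRel n) →ₐ[ℚ] B}
    (H : ∀ t : Tri n, g (RingQuot.mkAlgHom ℚ (QRel n) (FreeAlgebra.ι ℚ t)) =
         h (RingQuot.mkAlgHom ℚ (QRel n) (FreeAlgebra.ι ℚ t))) : g = h := by
  apply RingQuot.ringQuot_ext'
  apply FreeAlgebra.hom_ext
  funext t
  simpa using H t

private lemma fQ_unique (g : RingQuot (QRel n) →ₐ[ℚ] NCPoly n)
    (hg : ∀ i j k : Fin n, i ≠ j → i ≠ k → j ≠ k →
      g (RingQuot.mkAlgHom ℚ (QRel n) (yF i j k)) = Xinv k i * X k j) : g = fQ := by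
  apply Phom_ext
  intro t
  obtain ⟨⟨i, j, k⟩, h1, h2, h3⟩ := t
  have hy : yF i j k = FreeAlgebra.ι ℚ (⟨(i, j, k), h1, h2, h3⟩ : Tri n) := by
    rw [yF, dif_pos ⟨h1, h2, h3⟩]
  rw [← hy, hg i j k h1 h2 h3, fQ_gen h1 h2 h3]

private lemma fQ_range : (fQ (n := n)).range = Qn n := by
  have h1 : fQ.comp (RingQuot.mkAlgHom ℚ (QRel n)) = FQ := by
    apply FreeAlgebra.hom_ext
    funext t
    simp [fQ_mk]
  have h2 : (fQ.comp (RingQuot.mkAlgHom ℚ (QRel n))).range = fQ.range := by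
    rw [AlgHom.range_comp, (AlgHom.range_eq_top _).mpr (RingQuot.mkAlgHom_surjective ℚ _),
      Algebra.map_top]
  rw [← h2, h1, FQ, ← Algebra.adjoin_range_eq_range_freeAlgebra_lift]
  unfold Qn
  congr 1
  ext a
  constructor
  · rintro ⟨t, rfl⟩
    obtain ⟨⟨i, j, k⟩, hd1, hd2, hd3⟩ := t
    exact ⟨i, j, k, hd1, hd2, hd3, rfl⟩
  · rintro ⟨i, j, k, hd1, hd2, hd3, rfl⟩
    exact ⟨⟨(i, j, k), hd1, hd2, hd3⟩, rfl⟩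

/-! #### The crossed-product model used to prove injectivity -/

private abbrev MG (n : ℕ) := MonoidAlgebra (RingQuot (QRel n)) (FreeGroup (Option (Fin n)))

private lemma sss {G : Type*} [Group G] {R : Type*} [Semiring R] (g h : G) (c1 c2 c3 : R) :
    MonoidAlgebra.single g c1 * MonoidAlgebra.single h⁻¹ c2 * MonoidAlgebra.single h c3
      = MonoidAlgebra.single g (c1 * c2 * c3) := by
  rw [MonoidAlgebra.single_mul_single, MonoidAlgebra.single_mul_single, mul_assoc g,
    inv_mul_cancel, mul_one]

private lemma ss1 {G : Type*} [Group G] {R : Type*} [Semiring R] (g : G) (c1 c2 : R) :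
    MonoidAlgebra.single g c1 * MonoidAlgebra.single g⁻¹ c2
      = MonoidAlgebra.single 1 (c1 * c2) := by
  rw [MonoidAlgebra.single_mul_single, mul_inv_cancel]

private lemma ss2 {G : Type*} [Group G] {R : Type*} [Semiring R] (g : G) (c1 c2 : R) :
    MonoidAlgebra.single g⁻¹ c1 * MonoidAlgebra.single g c2
      = MonoidAlgebra.single 1 (c1 * c2) := by
  rw [MonoidAlgebra.single_mul_single, inv_mul_cancel]

private def xhat (z m i j : Fin n) : MG n :=
  if i = z then MonoidAlgebra.single (FreeGroup.of none) (Yq m j z)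
  else MonoidAlgebra.single (FreeGroup.of (some i)) (Yq z j i)

private def xihat (z m i j : Fin n) : MG n :=
  if i = z then MonoidAlgebra.single (FreeGroup.of none)⁻¹ (Yq j m z)
  else MonoidAlgebra.single (FreeGroup.of (some i))⁻¹ (Yq j z i)

private lemma xhat_z (z m j : Fin n) :
    xhat z m z j = MonoidAlgebra.single (FreeGroup.of none) (Yq m j z) := by
  rw [xhat, if_pos rfl]

private lemma xhat_nz (z m : Fin n) {i : Fin n} (j : Fin n) (h : i ≠ z) :
    xhat z m i j = MonoidAlgebra.single (FreeGroup.of (some i)) (Yq z j i) := by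
  rw [xhat, if_neg h]

private lemma xihat_z (z m j : Fin n) :
    xihat z m z j = MonoidAlgebra.single (FreeGroup.of none)⁻¹ (Yq j m z) := by
  rw [xihat, if_pos rfl]

private lemma xihat_nz (z m : Fin n) {i : Fin n} (j : Fin n) (h : i ≠ z) :
    xihat z m i j = MonoidAlgebra.single (FreeGroup.of (some i))⁻¹ (Yq j z i) := by
  rw [xihat, if_neg h]

/-! #### Coefficient identities in `𝒫_n` -/

private lemma LT0 {z i j k : Fin n} (hij : i ≠ j) (hik : i ≠ k) (hjk : j ≠ k)
    (hzi : z ≠ i) (hzj : z ≠ j) (hzk : z ≠ k) :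
    Yq z j i * Yq j z k * Yq z i k = Yq z k i * Yq k z j * Yq z i j := by
  have hR : Yq z k i * Yq k z j * Yq z i j = Yq z k i * Yq k i j := by
    rw [mul_assoc, Ymul hjk hzj.symm hij.symm]
  have hL : Yq z j i * Yq j z k * Yq z i k = Yq z k i * Yq k i j := by
    rw [mul_assoc, Ymul hjk.symm hzk.symm hik.symm, Ysplit hij.symm hjk hik,
      ← mul_assoc, Ymul hzi.symm hij hik]
  rw [hL, hR]

private lemma LT1 {z m j k : Fin n} (hmz : m ≠ z) (hjz : j ≠ z) (hkz : k ≠ z) (hjk : j ≠ k) :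
    Yq m j z * Yq j z k = Yq m k z * Yq k z j := by
  rw [Ysplit hjz hjk hkz.symm, ← mul_assoc, Ymul hmz.symm hjz.symm hkz.symm]

private lemma LT2 {z m i k : Fin n} (hmz : m ≠ z) (hiz : i ≠ z) (hkz : k ≠ z) (hik : i ≠ k) :
    Yq z i k = Yq z k i * Yq k m z * Yq m i z := by
  rw [mul_assoc, Ymul hkz.symm hmz.symm hiz.symm]
  exact Ysplit hiz.symm hkz.symm hik

private lemma LT3 {z m i j : Fin n} (hmz : m ≠ z) (hiz : i ≠ z) (hjz : j ≠ z) (hij : i ≠ j) :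
    Yq z j i * Yq j m z * Yq m i z = Yq z i j := by
  rw [mul_assoc, Ymul hjz.symm hmz.symm hiz.symm, Ysplit hjz.symm hiz.symm hij.symm,
    mul_assoc, Ymul hiz.symm hjz.symm hiz.symm, Yq_diag, mul_one]

private lemma LE0 {z i j k l : Fin n} (hcyc : IsCyclicSeq [i, j, k, l])
    (hzi : z ≠ i) (hzj : z ≠ j) (hzk : z ≠ k) (hzl : z ≠ l) :
    Yq z l j = Yq z k j * Yq k z i * Yq z l i + Yq z i j * Yq i z k * Yq z l k := by
  obtain ⟨hij, hik, hil, hjk, hjl, hkl⟩ := nodup4_ne hcyc.1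
  have t1 : Yq z i j * (Yq i j k * Yq j l i) = Yq z k j * Yq k z i * Yq z l i := by
    rw [Ysplit hij hik hjk]
    simp only [← mul_assoc]
    rw [Ymul hzj.symm hij.symm hjk, mul_assoc, Ymul hik hij hil,
      mul_assoc, Ymul hik hzi.symm hil]
  have t2 : Yq z i j * Yq i l k = Yq z i j * Yq i z k * Yq z l k := by
    rw [mul_assoc, Ymul hik.symm hzk.symm hkl]
  calc Yq z l j = Yq z i j * Yq i l j := (Ymul hzj.symm hij.symm hjl).symm
    _ = Yq z i j * (Yq i j k * Yq j l i) + Yq z i j * Yq i l k := by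
        rw [Yq_exch hcyc, mul_add]
    _ = _ := by rw [t1, t2]

private lemma LE1 {z m j k l : Fin n} (hcyc : IsCyclicSeq [z, j, k, l]) (hmz : m ≠ z) :
    Yq z l j = Yq z k j * Yq k m z * Yq m l z + Yq z l k := by
  obtain ⟨hzj, hzk, hzl, hjk, hjl, hkl⟩ := nodup4_ne hcyc.1
  have t1 : Yq z j k * Yq j l z = Yq z k j * Yq k m z * Yq m l z := by
    rw [Ysplit hzj hzk hjk, mul_assoc, Ymul hzk hzj hzl, mul_assoc, Ymul hzk hmz.symm hzl]
  rw [Yq_exch hcyc, t1]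

private lemma LE2 {z m i k l : Fin n} (hcyc : IsCyclicSeq [i, z, k, l]) (hmz : m ≠ z) :
    Yq m l z = Yq m k z * Yq k z i * Yq z l i + Yq m i z * Yq i z k * Yq z l k := by
  obtain ⟨hiz, hik, hil, hzk, hzl, hkl⟩ := nodup4_ne hcyc.1
  have t1 : Yq m i z * (Yq i z k * Yq z l i) = Yq m k z * Yq k z i * Yq z l i := by
    rw [Ysplit hiz hik hzk]
    simp only [← mul_assoc]
    rw [Ymul hmz.symm hiz.symm hzk]
  have t2 : Yq m i z * Yq i l k = Yq m i z * Yq i z k * Yq z l k := by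
    rw [mul_assoc, Ymul hik.symm hzk.symm hkl]
  calc Yq m l z = Yq m i z * Yq i l z := (Ymul hmz.symm hiz.symm hzl).symm
    _ = Yq m i z * (Yq i z k * Yq z l i) + Yq m i z * Yq i l k := by
        rw [Yq_exch hcyc, mul_add]
    _ = _ := by rw [t1, t2]

private lemma LE3 {z m i j l : Fin n} (hcyc : IsCyclicSeq [i, j, z, l]) (hmz : m ≠ z) :
    Yq z l j = Yq z l i + Yq z i j * Yq i m z * Yq m l z := by
  obtain ⟨hij, hiz, hil, hjz, hjl, hzl⟩ := nodup4_ne hcyc.1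
  have t1 : Yq z i j * (Yq i j z * Yq j l i) = Yq z l i := by
    rw [Ysplit hij hiz hjz]
    simp only [← mul_assoc]
    rw [Ymul hjz hij.symm hjz, Yq_diag, one_mul, Ymul hiz hij hil]
  have t2 : Yq z i j * Yq i l z = Yq z i j * Yq i m z * Yq m l z := by
    rw [mul_assoc, Ymul hiz.symm hmz.symm hzl]
  calc Yq z l j = Yq z i j * Yq i l j := (Ymul hjz hij.symm hjl).symm
    _ = Yq z i j * (Yq i j z * Yq j l i) + Yq z i j * Yq i l z := by
        rw [Yq_exch hcyc, mul_add]
    _ = _ := by rw [t1, t2]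

private lemma LE4 {z i j k : Fin n} (hcyc : IsCyclicSeq [i, j, k, z]) :
    (1 : RingQuot (QRel n)) = Yq z k j * Yq k z i + Yq z i j * Yq i z k := by
  obtain ⟨hij, hik, hiz, hjk, hjz, hkz⟩ := nodup4_ne hcyc.1
  have t1 : Yq z i j * (Yq i j k * Yq j z i) = Yq z k j * Yq k z i := by
    rw [Ysplit hij hik hjk]
    simp only [← mul_assoc]
    rw [Ymul hjz hij.symm hjk, mul_assoc, Ymul hik hij hiz]
  calc (1 : RingQuot (QRel n)) = Yq z i j * Yq i z j := by
        rw [Ymul hjz hij.symm hjz, Yq_diag]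
    _ = Yq z i j * (Yq i j k * Yq j z i) + Yq z i j * Yq i z k := by
        rw [Yq_exch hcyc, mul_add]
    _ = _ := by rw [t1]

/-! #### The homomorphism `𝒜_n → MG n` -/

private def genA (z m : Fin n) : AGen n → MG n :=
  Sum.elim (fun p => xhat z m p.1.1 p.1.2) (fun p => xihat z m p.1.1 p.1.2)

private def FA (z m : Fin n) : FreeAlgebra ℚ (AGen n) →ₐ[ℚ] MG n :=
  FreeAlgebra.lift ℚ (genA z m)

private lemma FA_xF (z m : Fin n) {i j : Fin n} (h : i ≠ j) :
    FA z m (xF i j) = xhat z m i j := by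
  rw [FA, xF, dif_pos h, FreeAlgebra.lift_ι_apply]
  rfl

private lemma FA_xiF (z m : Fin n) {i j : Fin n} (h : i ≠ j) :
    FA z m (xiF i j) = xihat z m i j := by
  rw [FA, xiF, dif_pos h, FreeAlgebra.lift_ι_apply]
  rfl

private lemma FA_rel (z m : Fin n) (hmz : m ≠ z) :
    ∀ ⦃x y : FreeAlgebra ℚ (AGen n)⦄, ARel n x y → FA z m x = FA z m y := by
  intro x y r
  induction r with
  | @mul_inv i j h =>
    rw [map_mul, map_one, FA_xF z m h, FA_xiF z m h]
    by_cases hi : i = z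
    · have hzj : z ≠ j := hi ▸ h
      rw [hi, xhat_z, xihat_z, ss1, Ymul hmz.symm hzj hmz.symm, Yq_diag]
      exact MonoidAlgebra.one_def.symm
    · rw [xhat_nz z m j hi, xihat_nz z m j hi, ss1, Ymul hi h hi, Yq_diag]
      exact MonoidAlgebra.one_def.symm
  | @inv_mul i j h =>
    rw [map_mul, map_one, FA_xF z m h, FA_xiF z m h]
    by_cases hi : i = z
    · have hzj : z ≠ j := hi ▸ h
      rw [hi, xhat_z, xihat_z, ss2, Ymul hzj hmz.symm hzj, Yq_diag]
      exact MonoidAlgebra.one_def.symm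
    · rw [xhat_nz z m j hi, xihat_nz z m j hi, ss2, Ymul h hi h, Yq_diag]
      exact MonoidAlgebra.one_def.symm
  | @triangle i j k hij hik hjk =>
    rw [map_mul, map_mul, map_mul, map_mul,
      FA_xF z m hij, FA_xiF z m hjk.symm, FA_xF z m hik.symm,
      FA_xF z m hik, FA_xiF z m hjk, FA_xF z m hij.symm]
    by_cases hi : i = z
    · have hjz : j ≠ z := fun hh => hij (hi.trans hh.symm)
      have hkz : k ≠ z := fun hh => hik (hi.trans hh.symm)
      rw [hi, xhat_z, xihat_nz z m j hkz, xhat_nz z m z hkz, xhat_z,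
        xihat_nz z m k hjz, xhat_nz z m z hjz, sss, sss]
      simp only [Yq_diag, one_mul, mul_one]
      exact congrArg _ (LT1 hmz hjz hkz hjk)
    by_cases hj : j = z
    · have hiz : i ≠ z := fun hh => hij (hh.trans hj.symm)
      have hkz : k ≠ z := fun hh => hjk (hj.trans hh.symm)
      rw [hj, xhat_nz z m z hiz, xihat_nz z m z hkz, xhat_nz z m i hkz,
        xhat_nz z m k hiz, xihat_z, xhat_z, sss, sss]
      simp only [Yq_diag, one_mul, mul_one]
      exact congrArg _ (LT2 hmz hiz hkz hik)
    by_cases hk : k = z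
    · have hiz : i ≠ z := fun hh => hik (hh.trans hk.symm)
      have hjz : j ≠ z := fun hh => hjk (hh.trans hk.symm)
      rw [hk, xhat_nz z m j hiz, xihat_z, xhat_z, xhat_nz z m z hiz,
        xihat_nz z m z hjz, xhat_nz z m i hjz, sss, sss]
      simp only [Yq_diag, one_mul, mul_one]
      exact congrArg _ (LT3 hmz hiz hjz hij)
    · rw [xhat_nz z m j hi, xihat_nz z m j hk, xhat_nz z m i hk,
        xhat_nz z m k hi, xihat_nz z m k hj, xhat_nz z m i hj, sss, sss]
      exact congrArg _ (LT0 hij hik hjk (fun hh => hi hh.symm) (fun hh => hj hh.symm)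
        (fun hh => hk hh.symm))
  | @exchange i j k l hcyc =>
    obtain ⟨hij, hik, hil, hjk, hjl, hkl⟩ := nodup4_ne hcyc.1
    rw [map_add, map_mul, map_mul, map_mul, map_mul,
      FA_xF z m hjl, FA_xF z m hjk, FA_xiF z m hik, FA_xF z m hil,
      FA_xF z m hij.symm, FA_xiF z m hik.symm, FA_xF z m hkl]
    by_cases hi : i = z
    · have hjz : j ≠ z := fun hh => hij (hi.trans hh.symm)
      have hkz : k ≠ z := fun hh => hik (hi.trans hh.symm)
      have hlz : l ≠ z := fun hh => hil (hi.trans hh.symm)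
      rw [hi] at hcyc
      rw [hi, xhat_nz z m l hjz, xhat_nz z m k hjz, xihat_z, xhat_z,
        xhat_nz z m z hjz, xihat_nz z m z hkz, xhat_nz z m l hkz, sss, sss]
      simp only [Yq_diag, one_mul, mul_one]
      rw [← MonoidAlgebra.single_add]
      exact congrArg _ (LE1 hcyc hmz)
    by_cases hj : j = z
    · have hiz : i ≠ z := fun hh => hij (hh.trans hj.symm)
      have hkz : k ≠ z := fun hh => hjk (hj.trans hh.symm)
      have hlz : l ≠ z := fun hh => hjl (hj.trans hh.symm)
      rw [hj] at hcyc
      rw [hj, xhat_z, xhat_z, xihat_nz z m k hiz, xhat_nz z m l hiz,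
        xhat_z, xihat_nz z m i hkz, xhat_nz z m l hkz, sss, sss]
      rw [← MonoidAlgebra.single_add]
      exact congrArg _ (LE2 hcyc hmz)
    by_cases hk : k = z
    · have hiz : i ≠ z := fun hh => hik (hh.trans hk.symm)
      have hjz : j ≠ z := fun hh => hjk (hh.trans hk.symm)
      have hlz : l ≠ z := fun hh => hkl (hk.trans hh.symm)
      rw [hk] at hcyc
      rw [hk, xhat_nz z m l hjz, xhat_nz z m z hjz, xihat_nz z m z hiz,
        xhat_nz z m l hiz, xhat_nz z m i hjz, xihat_z, xhat_z, sss, sss]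
      simp only [Yq_diag, one_mul, mul_one]
      rw [← MonoidAlgebra.single_add]
      exact congrArg _ (LE3 hcyc hmz)
    by_cases hl : l = z
    · have hiz : i ≠ z := fun hh => hil (hh.trans hl.symm)
      have hjz : j ≠ z := fun hh => hjl (hh.trans hl.symm)
      have hkz : k ≠ z := fun hh => hkl (hh.trans hl.symm)
      rw [hl] at hcyc
      rw [hl, xhat_nz z m z hjz, xhat_nz z m k hjz, xihat_nz z m k hiz,
        xhat_nz z m z hiz, xhat_nz z m i hjz, xihat_nz z m i hkz,
        xhat_nz z m z hkz, sss, sss]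
      simp only [Yq_diag, one_mul, mul_one]
      rw [← MonoidAlgebra.single_add]
      exact congrArg _ (LE4 hcyc)
    · rw [xhat_nz z m l hj, xhat_nz z m k hj, xihat_nz z m k hi, xhat_nz z m l hi,
        xhat_nz z m i hj, xihat_nz z m i hk, xhat_nz z m l hk, sss, sss]
      rw [← MonoidAlgebra.single_add]
      exact congrArg _ (LE0 hcyc (fun hh => hi hh.symm) (fun hh => hj hh.symm)
        (fun hh => hk hh.symm) (fun hh => hl hh.symm))

private def PhiA (z m : Fin n) (hmz : m ≠ z) : NCPoly n →ₐ[ℚ] MG n :=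
  RingQuot.liftAlgHom ℚ ⟨FA z m, FA_rel z m hmz⟩

private def JP : RingQuot (QRel n) →ₐ[ℚ] MG n :=
  MonoidAlgebra.singleOneAlgHom (R := ℚ) (A := RingQuot (QRel n))
    (M := FreeGroup (Option (Fin n)))

private lemma JP_inj : Function.Injective (JP (n := n)) := by
  intro a b hab
  have h : MonoidAlgebra.single (1 : FreeGroup (Option (Fin n))) a
      = MonoidAlgebra.single 1 b := by
    simpa [JP, MonoidAlgebra.singleOneAlgHom_apply] using hab
  exact MonoidAlgebra.single_right_inj.mp h

private lemma PhiA_fQ (z m : Fin n) (hmz : m ≠ z) :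
    (PhiA z m hmz).comp fQ = (JP (n := n)) := by
  apply Phom_ext
  intro t
  obtain ⟨⟨i, j, k⟩, h1, h2, h3⟩ := t
  have hy : yF i j k = FreeAlgebra.ι ℚ (⟨(i, j, k), h1, h2, h3⟩ : Tri n) := by
    rw [yF, dif_pos ⟨h1, h2, h3⟩]
  rw [← hy, AlgHom.coe_comp, Function.comp_apply, fQ_gen h1 h2 h3, map_mul]
  have hXinv : PhiA z m hmz (Xinv k i) = xihat z m k i := by
    show PhiA z m hmz (RingQuot.mkAlgHom ℚ (ARel n) (xiF k i)) = _
    rw [PhiA, RingQuot.liftAlgHom_mkAlgHom_apply, FA_xiF z m h2.symm]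
  have hX : PhiA z m hmz (X k j) = xhat z m k j := by
    show PhiA z m hmz (RingQuot.mkAlgHom ℚ (ARel n) (xF k j)) = _
    rw [PhiA, RingQuot.liftAlgHom_mkAlgHom_apply, FA_xF z m h3.symm]
  rw [hXinv, hX]
  by_cases hk : k = z
  · have hiz : i ≠ z := fun hh => h2 (hh.trans hk.symm)
    have hjz : j ≠ z := fun hh => h3 (hh.trans hk.symm)
    rw [hk, xihat_z, xhat_z, ss2, Ymul hiz.symm hmz.symm hjz.symm]
    simp only [JP, MonoidAlgebra.singleOneAlgHom_apply]
    rfl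
  · rw [xihat_nz z m i hk, xhat_nz z m j hk, ss2, Ymul (fun hh => h2 hh.symm) hk
      (fun hh => h3 hh.symm)]
    simp only [JP, MonoidAlgebra.singleOneAlgHom_apply]
    rfl

end Statement8


/-- The algebra homomorphism `𝒫_n → 𝒜_n` determined by
`Y_{ij}^k ↦ x_{ki}⁻¹ x_{kj}` is injective with image `𝒬_n`. -/
theorem presented_Qn (n : ℕ) (hn : 3 ≤ n) :
    ∃ f : RingQuot (QRel n) →ₐ[ℚ] NCPoly n,
      (∀ i j k : Fin n, i ≠ j → i ≠ k → j ≠ k →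
        f (RingQuot.mkAlgHom ℚ (QRel n) (yF i j k)) = Xinv k i * X k j) ∧
      (∀ g : RingQuot (QRel n) →ₐ[ℚ] NCPoly n,
        (∀ i j k : Fin n, i ≠ j → i ≠ k → j ≠ k →
          g (RingQuot.mkAlgHom ℚ (QRel n) (yF i j k)) = Xinv k i * X k j) → g = f) ∧
      Function.Injective f ∧ f.range = Qn n := by
  refine ⟨fQ, fun i j k h1 h2 h3 => fQ_gen h1 h2 h3, fun g hg => fQ_unique g hg, ?_, fQ_range⟩
  obtain ⟨z, m, hmz⟩ : ∃ z m : Fin n, m ≠ z :=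
    ⟨⟨0, by omega⟩, ⟨1, by omega⟩, by simp [Fin.ext_iff]⟩
  intro a b hab
  apply JP_inj (n := n)
  have h' : (PhiA z m hmz) (fQ a) = (PhiA z m hmz) (fQ b) := congrArg _ hab
  rw [← AlgHom.comp_apply, ← AlgHom.comp_apply, PhiA_fQ z m hmz] at h'
  exact h'

end NCPolygon
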